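/- There exists ε₀ > 0 such that for every ε ∈ (0, ε₀] there exists T₀ > 0 with the following property: for every T ≥ T₀ the map Φ_T preserves the cone field C^{uu}_ε, i.e., for every p ∈ ℝ³ the derivative DΦ_T(p) maps C^{uu}_ε(p) into C^{uu}_ε(Φ_T(p)). -/

import Mathlib

open Filter ContinuousLinearMap


/-- The map `Φ_T : ℝ³ → ℝ³` (with `ℝ³ = ℝ² × ℝ`):
`Φ_T(w, z) = (ψ_{z/T}(w), μ̂ z)` if `|z| ≤ T` and `Φ_T(w, z) = (w/2, μ̂ z)` if `|z| ≥ T`. -/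
noncomputable def PhiT (ψ : ℝ → ℝ × ℝ → ℝ × ℝ) (muh T : ℝ) (v : (ℝ × ℝ) × ℝ) :
    (ℝ × ℝ) × ℝ :=
  if |v.2| ≤ T then (ψ (v.2 / T) v.1, muh * v.2) else ((2 : ℝ)⁻¹ • v.1, muh * v.2)

/-- The strong unstable cone `C^{uu}_ε = {(u, v) ∈ ℝ² × ℝ : ‖u‖ ≤ ε |v|}` (at every base
point, identifying all tangent spaces of `ℝ³` with `ℝ³`). -/
def strongUnstableCone (ε : ℝ) : Set ((ℝ × ℝ) × ℝ) :=
  {u | ‖u.1‖ ≤ ε * |u.2|}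

/-- **Lemma 4.13.** Let `1 < λ` and `μ̂ > λ²`, and let `ψ : [-1,1] × ℝ² → ℝ²` be a `C¹`
family with `ψ_s(w) = w/2` for `s` near `±1`, fiber derivatives of norm at most `λ`, and
uniformly bounded `s`-derivative. Then there is `ε₀ > 0` such that for every
`ε ∈ (0, ε₀]` there is `T₀ > 0` such that for every `T ≥ T₀` the map `Φ_T` is
differentiable and its derivative maps the cone `C^{uu}_ε` into itself at every point. -/
theorem PhiT_preserves_cone_field
    (lam muh : ℝ) (hlam : 1 < lam) (hmuh : lam ^ 2 < muh)
    (ψ : ℝ → ℝ × ℝ → ℝ × ℝ)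
    (hψC1 : ContDiffOn ℝ 1 (fun sw : ℝ × (ℝ × ℝ) => ψ sw.1 sw.2)
      (Set.Icc (-1 : ℝ) 1 ×ˢ Set.univ))
    (hψend : ∃ δ > (0 : ℝ), ∀ s ∈ Set.Icc (-1 : ℝ) 1, (s < -1 + δ ∨ 1 - δ < s) →
      ∀ w : ℝ × ℝ, ψ s w = (2 : ℝ)⁻¹ • w)
    (hψfib : ∀ s ∈ Set.Icc (-1 : ℝ) 1, ∀ w : ℝ × ℝ, ‖fderiv ℝ (ψ s) w‖ ≤ lam)
    (hψpar : ∃ C : ℝ, ∀ s ∈ Set.Icc (-1 : ℝ) 1, ∀ w : ℝ × ℝ,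
      ‖deriv (fun s' => ψ s' w) s‖ ≤ C) :
    ∃ ε₀ > (0 : ℝ), ∀ ε : ℝ, 0 < ε → ε ≤ ε₀ →
      ∃ T₀ > (0 : ℝ), ∀ T ≥ T₀, ∀ p : (ℝ × ℝ) × ℝ,
        DifferentiableAt ℝ (PhiT ψ muh T) p ∧
        ∀ u ∈ strongUnstableCone ε,
          fderiv ℝ (PhiT ψ muh T) p u ∈ strongUnstableCone ε := by
  obtain ⟨δ, hδ, hend⟩ := hψend
  obtain ⟨C, hC⟩ := hψpar
  have hlam0 : (0:ℝ) < lam := lt_trans one_pos hlam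
  have hmuh1 : (1:ℝ) < muh := by nlinarith
  have hml : (0:ℝ) < muh - lam := by nlinarith
  set C' : ℝ := max C 0 with hC'def
  have hC'0 : 0 ≤ C' := le_max_right _ _
  have hCC' : C ≤ C' := le_max_left _ _
  refine ⟨1, one_pos, fun ε hε hε1 => ?_⟩
  refine ⟨max 1 ((C' + 1)/(ε*(muh-lam))), lt_of_lt_of_le one_pos (le_max_left _ _),
    fun T hT p => ?_⟩
  have hT1 : (1:ℝ) ≤ T := le_trans (le_max_left _ _) hT
  have hT0 : (0:ℝ) < T := lt_of_lt_of_le one_pos hT1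
  have hC'T : C' ≤ ε*(muh-lam)*T := by
    have h2 : (C'+1)/(ε*(muh-lam)) ≤ T := le_trans (le_max_right _ _) hT
    have h3 : C'+1 ≤ T * (ε*(muh-lam)) := (div_le_iff₀ (by positivity)).mp h2
    nlinarith
  by_cases hz : |p.2| < T
  · -- interior case
    set s : ℝ := p.2 / T with hsdef
    have habs : |s| < 1 := by
      rw [hsdef, abs_div, abs_of_pos hT0]
      exact (div_lt_one hT0).mpr hz
    have hs : s ∈ Set.Ioo (-1:ℝ) 1 := abs_lt.mp habs |> fun h => ⟨h.1, h.2⟩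
    have hFdiff : DifferentiableAt ℝ (fun sw : ℝ × (ℝ × ℝ) => ψ sw.1 sw.2) (s, p.1) := by
      have hint : (s, p.1) ∈ interior (Set.Icc (-1 : ℝ) 1 ×ˢ (Set.univ : Set (ℝ × ℝ))) := by
        rw [interior_prod_eq, interior_Icc, interior_univ]
        exact ⟨hs, Set.mem_univ _⟩
      exact (((hψC1.differentiableOn one_ne_zero).mono interior_subset).differentiableAt
        (isOpen_interior.mem_nhds hint))
    set D := fderiv ℝ (fun sw : ℝ × (ℝ × ℝ) => ψ sw.1 sw.2) (s, p.1) with hDdef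
    have hD : HasFDerivAt (fun sw : ℝ × (ℝ × ℝ) => ψ sw.1 sw.2) D (s, p.1) :=
      hFdiff.hasFDerivAt
    have hsIcc : s ∈ Set.Icc (-1:ℝ) 1 := ⟨hs.1.le, hs.2.le⟩
    -- fiber derivative
    have hinr : HasFDerivAt (fun w' : ℝ × ℝ => (s, w')) (inr ℝ ℝ (ℝ × ℝ)) p.1 := by
      have := (hasFDerivAt_const (𝕜 := ℝ) s p.1).prodMk (hasFDerivAt_id (𝕜 := ℝ) p.1)
      exact this
    have hψs : HasFDerivAt (ψ s) (D.comp (inr ℝ ℝ (ℝ × ℝ))) p.1 := hD.comp p.1 hinr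
    have h1 : ‖D.comp (inr ℝ ℝ (ℝ × ℝ))‖ ≤ lam := by
      rw [← hψs.fderiv]; exact hψfib s hsIcc p.1
    -- s-derivative
    have hinl : HasFDerivAt (fun s' : ℝ => (s', p.1)) (inl ℝ ℝ (ℝ × ℝ)) s := by
      have := (hasFDerivAt_id (𝕜 := ℝ) s).prodMk (hasFDerivAt_const (𝕜 := ℝ) p.1 s)
      exact this
    have hψp : HasFDerivAt (fun s' : ℝ => ψ s' p.1) (D.comp (inl ℝ ℝ (ℝ × ℝ))) s :=
      by have := hD.comp s hinl; exact this
    have h2 : ‖D (1, 0)‖ ≤ C := by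
      have := hψp.hasDerivAt.deriv
      have h3 : deriv (fun s' => ψ s' p.1) s = D (1, 0) := by
        rw [this]; simp
      rw [← h3]; exact hC s hsIcc p.1
    -- derivative of full map
    have hι : HasFDerivAt (fun q : (ℝ × ℝ) × ℝ => (q.2 / T, q.1))
        (((T⁻¹ • snd ℝ (ℝ × ℝ) ℝ)).prod (fst ℝ (ℝ × ℝ) ℝ)) p := by
      have h4 : HasFDerivAt (fun q : (ℝ × ℝ) × ℝ => q.2 / T) (T⁻¹ • snd ℝ (ℝ × ℝ) ℝ) p := by
        have := (hasFDerivAt_snd (𝕜 := ℝ) (p := p) (E := ℝ × ℝ) (F := ℝ)).const_smul T⁻¹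
        have e : (fun q : (ℝ × ℝ) × ℝ => q.2 / T) = T⁻¹ • Prod.snd := by
          funext q; exact div_eq_inv_mul _ _
        rw [e]; exact this
      exact h4.prodMk hasFDerivAt_fst
    have hG1 : HasFDerivAt (fun q : (ℝ × ℝ) × ℝ => ψ (q.2 / T) q.1)
        (D.comp (((T⁻¹ • snd ℝ (ℝ × ℝ) ℝ)).prod (fst ℝ (ℝ × ℝ) ℝ))) p := by have := hD.comp p hι; exact this
    have hG2 : HasFDerivAt (fun q : (ℝ × ℝ) × ℝ => muh * q.2) (muh • snd ℝ (ℝ × ℝ) ℝ) p :=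
      hasFDerivAt_snd.const_mul muh
    have hG : HasFDerivAt (fun q : (ℝ × ℝ) × ℝ => (ψ (q.2 / T) q.1, muh * q.2))
        ((D.comp (((T⁻¹ • snd ℝ (ℝ × ℝ) ℝ)).prod (fst ℝ (ℝ × ℝ) ℝ))).prod
          (muh • snd ℝ (ℝ × ℝ) ℝ)) p := hG1.prodMk hG2
    have heq : PhiT ψ muh T =ᶠ[nhds p]
        fun q : (ℝ × ℝ) × ℝ => (ψ (q.2 / T) q.1, muh * q.2) := by
      have hopen : IsOpen {q : (ℝ × ℝ) × ℝ | |q.2| < T} :=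
        isOpen_lt (continuous_abs.comp continuous_snd) continuous_const
      filter_upwards [hopen.mem_nhds hz] with q hq
      simp only [PhiT, if_pos hq.le]
    have hPhi : HasFDerivAt (PhiT ψ muh T)
        ((D.comp (((T⁻¹ • snd ℝ (ℝ × ℝ) ℝ)).prod (fst ℝ (ℝ × ℝ) ℝ))).prod
          (muh • snd ℝ (ℝ × ℝ) ℝ)) p := hG.congr_of_eventuallyEq heq
    refine ⟨hPhi.differentiableAt, fun u hu => ?_⟩
    rw [hPhi.fderiv]
    simp only [strongUnstableCone, Set.mem_setOf_eq] at hu ⊢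
    simp only [ContinuousLinearMap.prod_apply, ContinuousLinearMap.comp_apply,
      ContinuousLinearMap.smul_apply, ContinuousLinearMap.coe_snd', ContinuousLinearMap.coe_fst',
      smul_eq_mul]
    -- goal: ‖D (T⁻¹ * u.2, u.1)‖ ≤ ε * |muh * u.2|
    have hsplit : (T⁻¹ * u.2, u.1) = ((T⁻¹ * u.2) • ((1:ℝ), (0:ℝ×ℝ))) + ((0:ℝ), u.1) := by
      simp
    have hb1 : ‖D ((T⁻¹ * u.2) • ((1:ℝ), (0:ℝ×ℝ)))‖ ≤ (|u.2|/T) * C := by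
      rw [map_smul, norm_smul]
      have : ‖T⁻¹ * u.2‖ = |u.2|/T := by
        rw [Real.norm_eq_abs, abs_mul, abs_inv, abs_of_pos hT0, div_eq_inv_mul]
      rw [this]
      exact mul_le_mul_of_nonneg_left h2 (by positivity)
    have hb2 : ‖D ((0:ℝ), u.1)‖ ≤ lam * ‖u.1‖ := by
      have : D ((0:ℝ), u.1) = (D.comp (inr ℝ ℝ (ℝ × ℝ))) u.1 := by simp
      rw [this]
      exact le_trans ((D.comp (inr ℝ ℝ (ℝ × ℝ))).le_opNorm u.1)
        (mul_le_mul_of_nonneg_right h1 (norm_nonneg _))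
    have hb : ‖D (T⁻¹ * u.2, u.1)‖ ≤ (|u.2|/T) * C + lam * ‖u.1‖ := by
      rw [hsplit, map_add]
      exact le_trans (norm_add_le _ _) (add_le_add hb1 hb2)
    have habs2 : |muh * u.2| = muh * |u.2| := by
      rw [abs_mul, abs_of_pos (by linarith : (0:ℝ) < muh)]
    rw [habs2]
    have h5 : (|u.2|/T) * C ≤ ε * (muh - lam) * |u.2| := by
      rw [div_mul_eq_mul_div, div_le_iff₀ hT0]
      have := mul_le_mul_of_nonneg_left hC'T (abs_nonneg u.2)
      calc |u.2| * C ≤ |u.2| * C' := mul_le_mul_of_nonneg_left hCC' (abs_nonneg u.2)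
        _ ≤ |u.2| * (ε*(muh-lam)*T) := this
        _ = ε * (muh - lam) * |u.2| * T := by ring
    have h6 : lam * ‖u.1‖ ≤ lam * (ε * |u.2|) :=
      mul_le_mul_of_nonneg_left hu hlam0.le
    calc ‖D (T⁻¹ * u.2, u.1)‖ ≤ (|u.2|/T) * C + lam * ‖u.1‖ := hb
      _ ≤ ε * (muh - lam) * |u.2| + lam * (ε * |u.2|) := add_le_add h5 h6
      _ = ε * (muh * |u.2|) := by ring
  · -- boundary / outer case
    push_neg at hz
    have hmemU : T * (1 - δ) < |p.2| := by nlinarith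
    have hopen : IsOpen {q : (ℝ × ℝ) × ℝ | T * (1 - δ) < |q.2|} :=
      isOpen_lt continuous_const (continuous_abs.comp continuous_snd)
    have hL : HasFDerivAt (fun q : (ℝ × ℝ) × ℝ => ((2:ℝ)⁻¹ • q.1, muh * q.2))
        (((2:ℝ)⁻¹ • fst ℝ (ℝ × ℝ) ℝ).prod (muh • snd ℝ (ℝ × ℝ) ℝ)) p :=
      (hasFDerivAt_fst.const_smul ((2:ℝ)⁻¹)).prodMk (hasFDerivAt_snd.const_mul muh)
    have heq : PhiT ψ muh T =ᶠ[nhds p]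
        fun q : (ℝ × ℝ) × ℝ => ((2:ℝ)⁻¹ • q.1, muh * q.2) := by
      filter_upwards [hopen.mem_nhds hmemU] with q hq
      by_cases h : |q.2| ≤ T
      · have hsIcc : q.2 / T ∈ Set.Icc (-1:ℝ) 1 := by
          constructor
          · rw [le_div_iff₀ hT0]; have := abs_le.mp h; linarith
          · rw [div_le_one hT0]; exact (abs_le.mp h).2
        have hcase : q.2 / T < -1 + δ ∨ 1 - δ < q.2 / T := by
          have h7 : 1 - δ < |q.2 / T| := by
            rw [abs_div, abs_of_pos hT0, lt_div_iff₀ hT0]; nlinarith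
          rcases abs_cases (q.2 / T) with ⟨h8, _⟩ | ⟨h8, _⟩
          · right; rw [h8] at h7; exact h7
          · left; rw [h8] at h7; linarith
        simp only [PhiT, if_pos h, hend _ hsIcc hcase q.1]
      · simp only [PhiT, if_neg h]
    have hPhi : HasFDerivAt (PhiT ψ muh T)
        (((2:ℝ)⁻¹ • fst ℝ (ℝ × ℝ) ℝ).prod (muh • snd ℝ (ℝ × ℝ) ℝ)) p :=
      hL.congr_of_eventuallyEq heq
    refine ⟨hPhi.differentiableAt, fun u hu => ?_⟩
    rw [hPhi.fderiv]
    simp only [strongUnstableCone, Set.mem_setOf_eq] at hu ⊢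
    simp only [ContinuousLinearMap.prod_apply, ContinuousLinearMap.smul_apply,
      ContinuousLinearMap.coe_fst', ContinuousLinearMap.coe_snd', smul_eq_mul]
    rw [norm_smul]
    have habs2 : |muh * u.2| = muh * |u.2| := by
      rw [abs_mul, abs_of_pos (by linarith : (0:ℝ) < muh)]
    rw [habs2]
    have : ‖(2:ℝ)⁻¹‖ = (2:ℝ)⁻¹ := by norm_num
    rw [this]
    nlinarith [norm_nonneg u.1, abs_nonneg u.2]
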